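/- arXiv:2405.16564 — 7 statements merged into one kernel-verified Lean document; each statement's English description precedes it below -/
import Mathlib

section
/- Let α, c₁, c₂, r be positive real numbers. If a positive real number x satisfies x ≤ c₁ · x^(α/(2(1+α))) · r + c₂, then x ≤ (c₁ r)^((2α+2)/(α+2)) + 2 c₂. -/
/-- Lemma C.4: if a positive real `x` satisfies the transcendental inequality
`x ≤ c₁ * x ^ (α / (2 * (1 + α))) * r + c₂`, then
`x ≤ (c₁ * r) ^ ((2 * α + 2) / (α + 2)) + 2 * c₂`. -/
theorem stmt0 (α c₁ c₂ r x : ℝ) (hα : 0 < α) (hc₁ : 0 < c₁) (hc₂ : 0 < c₂) (hr : 0 < r)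
    (hx : 0 < x) (h : x ≤ c₁ * x ^ (α / (2 * (1 + α))) * r + c₂) :
    x ≤ (c₁ * r) ^ ((2 * α + 2) / (α + 2)) + 2 * c₂ := by
  set β : ℝ := α / (2 * (1 + α)) with hβdef
  have h1α : (0:ℝ) < 1 + α := by linarith
  have hβ0 : 0 < β := div_pos hα (by linarith)
  have hβhalf : β ≤ 1/2 := by
    rw [hβdef, div_le_div_iff₀ (by linarith) (by norm_num)]
    linarith
  have hβ1 : (1:ℝ)/2 ≤ 1 - β := by linarith
  set e : ℝ := (2 * α + 2) / (α + 2) with hedef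
  set A : ℝ := (c₁ * r) ^ e with hAdef
  have hcr : 0 < c₁ * r := mul_pos hc₁ hr
  have hA : 0 < A := Real.rpow_pos_of_pos hcr e
  have hAe : A ^ (1 - β) = c₁ * r := by
    rw [hAdef, ← Real.rpow_mul hcr.le]
    have : e * (1 - β) = 1 := by
      rw [hedef, hβdef]
      field_simp
      ring
    rw [this, Real.rpow_one]
  have young : A ^ (1 - β) * x ^ β ≤ (1 - β) * A + β * x :=
    Real.geom_mean_le_arith_mean2_weighted (by linarith) hβ0.le hA.le hx.le (by ring)
  have h2 : x ≤ (1 - β) * A + β * x + c₂ := by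
    calc x ≤ c₁ * x ^ β * r + c₂ := h
    _ = A ^ (1 - β) * x ^ β + c₂ := by rw [hAe]; ring
    _ ≤ (1 - β) * A + β * x + c₂ := by linarith
  -- (1-β)*x ≤ (1-β)*A + c₂
  have h3 : (1 - β) * x ≤ (1 - β) * A + c₂ := by linarith [h2]
  have hβ1' : 0 < 1 - β := by linarith
  have h4 : x ≤ A + c₂ / (1 - β) := by
    calc x = (1 - β) * x / (1 - β) := by field_simp
    _ ≤ ((1 - β) * A + c₂) / (1 - β) := by
        exact div_le_div_of_nonneg_right h3 hβ1'.le
    _ = A + c₂ / (1 - β) := by field_simp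
  have h5 : c₂ / (1 - β) ≤ 2 * c₂ := by
    rw [div_le_iff₀ hβ1']
    nlinarith
  linarith
end

section
/- For all positive real numbers α, c₁, c₂, r: (c₁ r)^((2α+2)/(α+2)) + c₂ ≥ c₁ · ((c₁ r)^((2α+2)/(α+2)) + 2 c₂)^(α/(2(1+α))) · r. -/
/-- The key ("original") inequality verified in the proof of Lemma C.4. -/
theorem stmt2 (α c₁ c₂ r : ℝ) (hα : 0 < α) (hc₁ : 0 < c₁) (hc₂ : 0 < c₂) (hr : 0 < r) :
    (c₁ * r) ^ ((2 * α + 2) / (α + 2)) + c₂ ≥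
      c₁ * ((c₁ * r) ^ ((2 * α + 2) / (α + 2)) + 2 * c₂) ^ (α / (2 * (1 + α))) * r := by
  set t := c₁ * r with htdef
  have ht : 0 < t := mul_pos hc₁ hr
  set p := (2 * α + 2) / (α + 2) with hpdef
  set q := α / (2 * (1 + α)) with hqdef
  have hα2 : (0:ℝ) < 2 * (1 + α) := by linarith
  have hq : 0 ≤ q := div_nonneg hα.le hα2.le
  have h2q : 2 * q ≤ 1 := by
    rw [hqdef, mul_comm, div_mul_eq_mul_div, div_le_one hα2]
    linarith
  have h1q : 0 ≤ 1 - q := by linarith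
  have hx : 0 < t ^ p := Real.rpow_pos_of_pos ht p
  have hx2 : 0 ≤ t ^ p + 2 * c₂ := by positivity
  have key := Real.geom_mean_le_arith_mean2_weighted h1q hq hx.le hx2 (by ring)
  have hpq : p * (1 - q) = 1 := by
    rw [hpdef, hqdef]
    field_simp
    ring
  have ht' : (t ^ p) ^ (1 - q) = t := by
    rw [← Real.rpow_mul ht.le, hpq, Real.rpow_one]
  rw [ht'] at key
  have : c₁ * (t ^ p + 2 * c₂) ^ q * r = t * (t ^ p + 2 * c₂) ^ q := by
    rw [htdef]; ring
  rw [ge_iff_le, this]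
  nlinarith [key, hc₂]
end

section
/- Let m₁, m₂ be positive integers with m₂ ≥ 2 m₁ + 1, and let c₁, c₂, r be positive real numbers. Setting a = (c₁ r)^(m₂/(m₂ − m₁)), we have (a + c₂)^(m₂) ≥ c₁^(m₂) · (a + 2 c₂)^(m₁) · r^(m₂). -/
/-- The rational-exponent polynomial inequality from the proof of Lemma C.4:
for positive integers `m₁, m₂` with `m₂ ≥ 2 m₁ + 1` and positive reals `c₁, c₂, r`,
setting `a = (c₁ r) ^ (m₂ / (m₂ - m₁))`, we have
`(a + c₂) ^ m₂ ≥ c₁ ^ m₂ * (a + 2 c₂) ^ m₁ * r ^ m₂`. -/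
theorem stmt3 (m₁ m₂ : ℕ) (hm₁ : 0 < m₁) (hm : 2 * m₁ + 1 ≤ m₂) (c₁ c₂ r : ℝ)
    (hc₁ : 0 < c₁) (hc₂ : 0 < c₂) (hr : 0 < r) :
    ((c₁ * r) ^ ((m₂ : ℝ) / ((m₂ : ℝ) - (m₁ : ℝ))) + c₂) ^ m₂ ≥
      c₁ ^ m₂ * ((c₁ * r) ^ ((m₂ : ℝ) / ((m₂ : ℝ) - (m₁ : ℝ))) + 2 * c₂) ^ m₁ * r ^ m₂ := by
  set p : ℝ := (m₂ : ℝ) / ((m₂ : ℝ) - (m₁ : ℝ)) with hp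
  set a : ℝ := (c₁ * r) ^ p with ha
  have hcr : 0 < c₁ * r := mul_pos hc₁ hr
  have ha0 : 0 < a := Real.rpow_pos_of_pos hcr p
  have hmlt : m₁ < m₂ := by omega
  have hsub : (0:ℝ) < (m₂ : ℝ) - (m₁ : ℝ) := by
    have : (m₁:ℝ) < m₂ := by exact_mod_cast hmlt
    linarith
  have key : a ^ (m₂ - m₁) = (c₁ * r) ^ m₂ := by
    rw [ha, ← Real.rpow_natCast ((c₁*r)^p) (m₂-m₁), ← Real.rpow_mul hcr.le,
      ← Real.rpow_natCast (c₁*r) m₂]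
    congr 1
    rw [hp, Nat.cast_sub hmlt.le]
    field_simp
  have h1 : a * (a + 2*c₂) ≤ (a + c₂)^2 := by nlinarith [sq_nonneg c₂]
  have h2 : (a * (a + 2*c₂))^m₁ ≤ ((a+c₂)^2)^m₁ := pow_le_pow_left₀ (by positivity) h1 m₁
  have h3 : a^(m₂-2*m₁) ≤ (a+c₂)^(m₂-2*m₁) := pow_le_pow_left₀ ha0.le (by linarith) _
  rw [ge_iff_le]
  calc c₁ ^ m₂ * (a + 2*c₂) ^ m₁ * r ^ m₂
      = a^(m₂-m₁) * (a+2*c₂)^m₁ := by rw [mul_right_comm, ← mul_pow, ← key]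
    _ = (a*(a+2*c₂))^m₁ * a^(m₂-2*m₁) := by
        rw [mul_pow, show m₂ - m₁ = m₁ + (m₂ - 2*m₁) from by omega, pow_add]; ring
    _ ≤ ((a+c₂)^2)^m₁ * (a+c₂)^(m₂-2*m₁) :=
        mul_le_mul h2 h3 (by positivity) (by positivity)
    _ = (a+c₂)^m₂ := by rw [← pow_mul, ← pow_add]; congr 1; omega
end

section
/- For all natural numbers i, m₁, m₂ with i ≤ m₁ and m₂ ≥ 2 m₁ + 1, we have m₂! · i! ≥ m₁! · 2^(m₁ − i) · (i + m₂ − m₁)!. -/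
lemma stmt4_aux (k i n : ℕ) (h : 2 * (i + k) + 1 ≤ n + k) :
    (i + k).factorial * 2 ^ k * n.factorial ≤ (n + k).factorial * i.factorial := by
  induction k with
  | zero => simp [Nat.mul_comm]
  | succ k ih =>
    have h' : 2 * (i + k) + 1 ≤ n + k := by omega
    have ihk := ih h'
    have key : 2 * (i + k + 1) ≤ n + k + 1 := by omega
    calc (i + (k+1)).factorial * 2 ^ (k+1) * n.factorial
        = (i + k + 1) * 2 * ((i + k).factorial * 2 ^ k * n.factorial) := by
          rw [show i + (k+1) = i + k + 1 by omega, Nat.factorial_succ]; ring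
      _ ≤ (i + k + 1) * 2 * ((n + k).factorial * i.factorial) := by
          exact Nat.mul_le_mul_left _ ihk
      _ ≤ (n + k + 1) * ((n + k).factorial * i.factorial) := by
          apply Nat.mul_le_mul_right
          omega
      _ = (n + (k+1)).factorial * i.factorial := by
          rw [show n + (k+1) = n + k + 1 by omega, Nat.factorial_succ]; ring

/-- The combinatorial (multinomial coefficient) inequality from the proof of Lemma C.4:
for naturals `i ≤ m₁` and `m₂ ≥ 2 m₁ + 1`,
`m₂! * i! ≥ m₁! * 2 ^ (m₁ - i) * (i + m₂ - m₁)!`. -/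
theorem stmt4 (i m₁ m₂ : ℕ) (hi : i ≤ m₁) (h : 2 * m₁ + 1 ≤ m₂) :
    m₁.factorial * 2 ^ (m₁ - i) * (i + m₂ - m₁).factorial ≤
      m₂.factorial * i.factorial := by
  have e1 : i + (m₁ - i) = m₁ := by omega
  have e2 : i + m₂ - m₁ + (m₁ - i) = m₂ := by omega
  have := stmt4_aux (m₁ - i) i (i + m₂ - m₁) (by omega)
  rw [e1, e2] at this
  exact this
end

section
/- Assume ignorability. Let G : ℝ^p → ℝ^{d×d} be a bounded measurable matrix-valued function such that, almost surely, G(X) satisfies the Penrose equations for Σ₀(X), and let π be a policy such that π(X) lies in the column space of Σ₀(X) almost surely. Then E[(G(X) Z C)ᵀ π(X)] = E[f₀(X)ᵀ π(X)]. -/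
open MeasureTheory Matrix

/-- `G` satisfies the four Penrose equations for `S`. -/
def Penrose {d : ℕ} (S G : Matrix (Fin d) (Fin d) ℝ) : Prop :=
  S * G * S = S ∧ G * S * G = G ∧ (S * G)ᵀ = S * G ∧ (G * S)ᵀ = G * S

/-- Dot product bound from entrywise bounds. -/
lemma abs_dot_le {d : ℕ} (a b : Fin d → ℝ) (Ma Mb : ℝ)
    (ha : ∀ i, |a i| ≤ Ma) (hb : ∀ i, |b i| ≤ Mb) :
    |a ⬝ᵥ b| ≤ d * (Ma * Mb) := by
  calc |a ⬝ᵥ b| ≤ ∑ i, |a i * b i| := Finset.abs_sum_le_sum_abs _ _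
    _ ≤ ∑ _i : Fin d, Ma * Mb := Finset.sum_le_sum fun i _ => by
        rw [abs_mul]
        exact mul_le_mul (ha i) (hb i) (abs_nonneg _) ((abs_nonneg _).trans (ha i))
    _ = d * (Ma * Mb) := by
        simp [Finset.sum_const, Finset.card_univ, nsmul_eq_mul]

/-- Bounded measurable functions are integrable on a finite measure space. -/
lemma integrable_of_abs_bounded {Ω : Type*} [MeasurableSpace Ω] {μ : Measure Ω}
    [IsFiniteMeasure μ] {f : Ω → ℝ} (hf : Measurable f) (c : ℝ) (h : ∀ ω, |f ω| ≤ c) :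
    Integrable f μ :=
  ⟨hf.aestronglyMeasurable,
    HasFiniteIntegral.of_bounded (ae_of_all _ fun ω => by
      simpa [Real.norm_eq_abs] using h ω)⟩

/-- Tower rule / pull-out step: multiplying a bounded `m`-measurable factor. -/
lemma tower_mul {Ω : Type*} {m0 : MeasurableSpace Ω} {μ : Measure Ω} [IsProbabilityMeasure μ]
    {m : MeasurableSpace Ω} (hm : m ≤ m0) {f g : Ω → ℝ} (hf : Integrable f μ)
    (hg : StronglyMeasurable[m] g) (c : ℝ) (hgb : ∀ ω, |g ω| ≤ c) :
    ∫ ω, g ω * f ω ∂μ = ∫ ω, g ω * (μ[f|m]) ω ∂μ := by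
  have h2 : μ[(fun ω => g ω * f ω)|m] =ᵐ[μ] fun ω => g ω * (μ[f|m]) ω :=
    condExp_stronglyMeasurable_mul_of_bound hm hg hf c
      (ae_of_all _ fun ω => by simpa [Real.norm_eq_abs] using hgb ω)
  have h1 : ∫ ω, (μ[(fun ω => g ω * f ω)|m]) ω ∂μ = ∫ ω, g ω * f ω ∂μ :=
    integral_condExp hm
  rw [← h1]
  exact integral_congr_ae h2

lemma dot_transpose_mulVec {d : ℕ} (M : Matrix (Fin d) (Fin d) ℝ) (x y : Fin d → ℝ) :
    (Mᵀ *ᵥ x) ⬝ᵥ y = x ⬝ᵥ (M *ᵥ y) := by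
  rw [mulVec_transpose, dotProduct_mulVec]

/-- Key linear-algebra identity. -/
lemma alg_key {d : ℕ} (S G : Matrix (Fin d) (Fin d) ℝ)
    (hs : Sᵀ = S) (hp : S * G * S = S) (f πv w : Fin d → ℝ)
    (hw : S.mulVec w = πv) :
    Gᵀ.mulVec πv ⬝ᵥ S.mulVec f = f ⬝ᵥ πv := by
  subst hw
  calc Gᵀ *ᵥ (S *ᵥ w) ⬝ᵥ (S *ᵥ f)
      = (S *ᵥ w) ⬝ᵥ (G *ᵥ (S *ᵥ f)) := dot_transpose_mulVec _ _ _
    _ = (Sᵀ *ᵥ w) ⬝ᵥ (G *ᵥ (S *ᵥ f)) := by rw [hs]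
    _ = w ⬝ᵥ (S *ᵥ (G *ᵥ (S *ᵥ f))) := dot_transpose_mulVec _ _ _
    _ = w ⬝ᵥ (S *ᵥ f) := by
        rw [mulVec_mulVec, mulVec_mulVec, hp]
    _ = (Sᵀ *ᵥ w) ⬝ᵥ f := (dot_transpose_mulVec S w f).symm
    _ = (S *ᵥ w) ⬝ᵥ f := by rw [hs]
    _ = f ⬝ᵥ (S *ᵥ w) := dotProduct_comm _ _

/-- Proposition 1 (inverse spectral weighting identification): under ignorability, for a
bounded measurable `G` that is a.s. a Penrose pseudo-inverse of `Σ₀(X)` and a policy `π`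
with `π(X)` a.s. in the column space of `Σ₀(X)`,
`E[(G(X) Z C)ᵀ π(X)] = E[f₀(X)ᵀ π(X)]`. -/
theorem stmt9 {Ω : Type*} [MeasurableSpace Ω] (μ : Measure Ω) [IsProbabilityMeasure μ]
    {p d : ℕ} (X : Ω → Fin p → ℝ) (Z Y : Ω → Fin d → ℝ)
    (hX : Measurable X) (hZ : Measurable Z) (hY : Measurable Y)
    (hZb : ∃ M, ∀ ω, ‖Z ω‖ ≤ M) (hYb : ∃ M, ∀ ω, ‖Y ω‖ ≤ M)
    (C : Ω → ℝ) (hC : ∀ ω, C ω = Z ω ⬝ᵥ Y ω)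
    (f₀ : (Fin p → ℝ) → Fin d → ℝ) (hf₀ : Measurable f₀) (hf₀b : ∃ M, ∀ x, ‖f₀ x‖ ≤ M)
    (hf₀ce : ∀ j, (fun ω => f₀ (X ω) j) =ᵐ[μ]
      μ[(fun ω => Y ω j) | MeasurableSpace.comap X inferInstance])
    (S₀ : (Fin p → ℝ) → Matrix (Fin d) (Fin d) ℝ)
    (hS₀ : ∀ i j, Measurable fun x => S₀ x i j)
    (hS₀b : ∃ M, ∀ x i j, |S₀ x i j| ≤ M)
    (hS₀ce : ∀ i j, (fun ω => S₀ (X ω) i j) =ᵐ[μ]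
      μ[(fun ω => Z ω i * Z ω j) | MeasurableSpace.comap X inferInstance])
    (hIgn : (fun ω => Z ω ⬝ᵥ f₀ (X ω)) =ᵐ[μ]
      μ[C | MeasurableSpace.comap (fun ω => (X ω, Z ω)) inferInstance])
    (G : (Fin p → ℝ) → Matrix (Fin d) (Fin d) ℝ)
    (hG : ∀ i j, Measurable fun x => G x i j)
    (hGb : ∃ M, ∀ x i j, |G x i j| ≤ M)
    (hPen : ∀ᵐ ω ∂μ, Penrose (S₀ (X ω)) (G (X ω)))
    (π : (Fin p → ℝ) → Fin d → ℝ) (hπ : Measurable π) (hπb : ∃ M, ∀ x, ‖π x‖ ≤ M)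
    (hπcol : ∀ᵐ ω ∂μ, ∃ w, (S₀ (X ω)).mulVec w = π (X ω)) :
    ∫ ω, (G (X ω)).mulVec (C ω • Z ω) ⬝ᵥ π (X ω) ∂μ =
      ∫ ω, f₀ (X ω) ⬝ᵥ π (X ω) ∂μ := by
  classical
  obtain ⟨MZ, hMZ⟩ := hZb
  obtain ⟨MY, hMY⟩ := hYb
  obtain ⟨Mf, hMf⟩ := hf₀b
  obtain ⟨MG, hMG⟩ := hGb
  obtain ⟨Mπ, hMπ⟩ := hπb
  -- componentwise bounds
  have bZ : ∀ ω i, |Z ω i| ≤ MZ := fun ω i => by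
    simpa [Real.norm_eq_abs] using (norm_le_pi_norm (Z ω) i).trans (hMZ ω)
  have bY : ∀ ω i, |Y ω i| ≤ MY := fun ω i => by
    simpa [Real.norm_eq_abs] using (norm_le_pi_norm (Y ω) i).trans (hMY ω)
  have bf : ∀ x j, |f₀ x j| ≤ Mf := fun x j => by
    simpa [Real.norm_eq_abs] using (norm_le_pi_norm (f₀ x) j).trans (hMf x)
  have bπ : ∀ x i, |π x i| ≤ Mπ := fun x i => by
    simpa [Real.norm_eq_abs] using (norm_le_pi_norm (π x) i).trans (hMπ x)
  -- the auxiliary vector field `u = Gᵀ π` and scalar field `v = Z ⬝ u(X)`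
  set u : (Fin p → ℝ) → Fin d → ℝ := fun x => (G x)ᵀ.mulVec (π x) with hu_def
  set v : Ω → ℝ := fun ω => Z ω ⬝ᵥ u (X ω) with hv_def
  have bu : ∀ x i, |u x i| ≤ d * (MG * Mπ) := fun x i =>
    abs_dot_le (fun k => G x k i) (π x) MG Mπ (fun k => hMG x k i) (bπ x)
  have bv : ∀ ω, |v ω| ≤ d * (MZ * (d * (MG * Mπ))) := fun ω =>
    abs_dot_le (Z ω) (u (X ω)) MZ (d * (MG * Mπ)) (bZ ω) (bu (X ω))
  have hu : ∀ i, Measurable fun x => u x i := fun i => by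
    show Measurable fun x => ∑ k, G x k i * π x k
    exact Finset.measurable_sum _ fun k _ =>
      (hG k i).mul ((measurable_pi_apply k).comp hπ)
  -- σ-algebras
  have hm1 : MeasurableSpace.comap X inferInstance ≤ _ := hX.comap_le
  have hm2 : MeasurableSpace.comap (fun ω => (X ω, Z ω)) inferInstance ≤ _ :=
    (hX.prodMk hZ).comap_le
  have hXm1 : @Measurable Ω (Fin p → ℝ) (MeasurableSpace.comap X inferInstance) _ X :=
    Measurable.of_comap_le le_rfl
  have hXZm2 : @Measurable Ω ((Fin p → ℝ) × (Fin d → ℝ))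
      (MeasurableSpace.comap (fun ω => (X ω, Z ω)) inferInstance) _ (fun ω => (X ω, Z ω)) :=
    Measurable.of_comap_le le_rfl
  -- measurability of v w.r.t. m2
  have hvm2 : StronglyMeasurable[MeasurableSpace.comap (fun ω => (X ω, Z ω)) inferInstance]
      v := by
    have hF : Measurable fun q : (Fin p → ℝ) × (Fin d → ℝ) => q.2 ⬝ᵥ u q.1 := by
      show Measurable fun q : (Fin p → ℝ) × (Fin d → ℝ) => ∑ i, q.2 i * u q.1 i
      exact Finset.measurable_sum _ fun i _ =>
        ((measurable_pi_apply i).comp measurable_snd).mul ((hu i).comp measurable_fst)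
    exact (hF.comp hXZm2).stronglyMeasurable
  -- integrability of C
  have mC : Measurable C := by
    have : C = fun ω => ∑ i, Z ω i * Y ω i := funext fun ω => hC ω
    rw [this]
    exact Finset.measurable_sum _ fun i _ =>
      ((measurable_pi_apply i).comp hZ).mul ((measurable_pi_apply i).comp hY)
  have IC : Integrable C μ := integrable_of_abs_bounded mC (d * (MZ * MY))
    (fun ω => by rw [hC ω]; exact abs_dot_le _ _ MZ MY (bZ ω) (bY ω))
  -- Step 0: rewrite the integrand
  have step0 : ∀ ω, (G (X ω)).mulVec (C ω • Z ω) ⬝ᵥ π (X ω) = v ω * C ω := by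
    intro ω
    have h1 : (G (X ω)).mulVec (C ω • Z ω) = C ω • (G (X ω)).mulVec (Z ω) :=
      mulVec_smul _ _ _
    rw [h1, smul_dotProduct, smul_eq_mul, mul_comm]
    congr 1
    exact (calc v ω = (u (X ω)) ⬝ᵥ Z ω := dotProduct_comm _ _
      _ = π (X ω) ⬝ᵥ ((G (X ω)) *ᵥ Z ω) := dot_transpose_mulVec _ _ _
      _ = (G (X ω)) *ᵥ Z ω ⬝ᵥ π (X ω) := dotProduct_comm _ _).symm
  -- Step 1: tower over m2 and ignorability
  have step1 : ∫ ω, v ω * C ω ∂μ = ∫ ω, v ω * (Z ω ⬝ᵥ f₀ (X ω)) ∂μ := by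
    rw [tower_mul hm2 IC hvm2 _ bv]
    refine integral_congr_ae ?_
    filter_upwards [hIgn] with ω h
    rw [← h]
  -- Step 2: expand as a double sum
  have step2 : ∀ ω, v ω * (Z ω ⬝ᵥ f₀ (X ω)) =
      ∑ i, ∑ j, (u (X ω) i * f₀ (X ω) j) * (Z ω i * Z ω j) := by
    intro ω
    show (∑ i, Z ω i * u (X ω) i) * (∑ j, Z ω j * f₀ (X ω) j) = _
    rw [Finset.sum_mul_sum]
    exact Finset.sum_congr rfl fun i _ => Finset.sum_congr rfl fun j _ => by ring
  -- integrability lemmas for the terms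
  have Igf : ∀ i j : Fin d, Integrable (fun ω => Z ω i * Z ω j) μ := fun i j =>
    integrable_of_abs_bounded
      (((measurable_pi_apply i).comp hZ).mul ((measurable_pi_apply j).comp hZ))
      (MZ * MZ) (fun ω => by
        rw [abs_mul]
        exact mul_le_mul (bZ ω i) (bZ ω j) (abs_nonneg _) ((abs_nonneg _).trans (bZ ω i)))
  have hg_meas : ∀ i j : Fin d, Measurable fun ω => u (X ω) i * f₀ (X ω) j := fun i j =>
    ((hu i).comp hX).mul (((measurable_pi_apply j).comp hf₀).comp hX)
  have hg_bound : ∀ (i j : Fin d) (ω : Ω),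
      |u (X ω) i * f₀ (X ω) j| ≤ d * (MG * Mπ) * Mf := fun i j ω => by
    rw [abs_mul]
    exact mul_le_mul (bu (X ω) i) (bf (X ω) j) (abs_nonneg _)
      ((abs_nonneg _).trans (bu (X ω) i))
  have hg_sm : ∀ i j : Fin d, StronglyMeasurable[MeasurableSpace.comap X inferInstance]
      fun ω => u (X ω) i * f₀ (X ω) j :=
    fun i j => ((((hu i).mul ((measurable_pi_apply j).comp hf₀)).comp hXm1)).stronglyMeasurable
  have Iterm : ∀ i j : Fin d,
      Integrable (fun ω => (u (X ω) i * f₀ (X ω) j) * (Z ω i * Z ω j)) μ := fun i j =>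
    integrable_of_abs_bounded ((hg_meas i j).mul
      (((measurable_pi_apply i).comp hZ).mul ((measurable_pi_apply j).comp hZ)))
      ((d * (MG * Mπ) * Mf) * (MZ * MZ)) (fun ω => by
        rw [abs_mul]
        refine mul_le_mul (hg_bound i j ω) ?_ (abs_nonneg _)
          ((abs_nonneg _).trans (hg_bound i j ω))
        rw [abs_mul]
        exact mul_le_mul (bZ ω i) (bZ ω j) (abs_nonneg _) ((abs_nonneg _).trans (bZ ω i)))
  have Iterm' : ∀ i j : Fin d,
      Integrable (fun ω => (u (X ω) i * f₀ (X ω) j) * S₀ (X ω) i j) μ := fun i j => by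
    obtain ⟨MS, hMS⟩ := hS₀b
    exact integrable_of_abs_bounded ((hg_meas i j).mul (((hS₀ i j).comp hX)))
      ((d * (MG * Mπ) * Mf) * MS) (fun ω => by
        rw [abs_mul]
        exact mul_le_mul (hg_bound i j ω) (hMS (X ω) i j) (abs_nonneg _)
          ((abs_nonneg _).trans (hg_bound i j ω)))
  -- Step 3: swap sum and integral, tower over m1, substitute S₀
  have step3 : ∫ ω, (∑ i, ∑ j, (u (X ω) i * f₀ (X ω) j) * (Z ω i * Z ω j)) ∂μ =
      ∫ ω, (∑ i, ∑ j, (u (X ω) i * f₀ (X ω) j) * S₀ (X ω) i j) ∂μ := by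
    rw [integral_finset_sum _ (fun i _ => integrable_finset_sum _ (fun j _ => Iterm i j)),
      integral_finset_sum _ (fun i _ => integrable_finset_sum _ (fun j _ => Iterm' i j))]
    refine Finset.sum_congr rfl fun i _ => ?_
    rw [integral_finset_sum _ (fun j _ => Iterm i j),
      integral_finset_sum _ (fun j _ => Iterm' i j)]
    refine Finset.sum_congr rfl fun j _ => ?_
    rw [tower_mul hm1 (Igf i j) (hg_sm i j) _ (hg_bound i j)]
    refine integral_congr_ae ?_
    filter_upwards [hS₀ce i j] with ω h
    rw [← h]
  -- Step 4: the double sum is a quadratic form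
  have step4 : ∀ ω, (∑ i, ∑ j, (u (X ω) i * f₀ (X ω) j) * S₀ (X ω) i j) =
      u (X ω) ⬝ᵥ (S₀ (X ω)).mulVec (f₀ (X ω)) := by
    intro ω
    show _ = ∑ i, u (X ω) i * ((S₀ (X ω)) *ᵥ (f₀ (X ω))) i
    refine Finset.sum_congr rfl fun i _ => ?_
    show _ = u (X ω) i * ∑ j, S₀ (X ω) i j * f₀ (X ω) j
    rw [Finset.mul_sum]
    exact Finset.sum_congr rfl fun j _ => by ring
  -- a.s. symmetry of S₀(X)
  have hsym : ∀ᵐ ω ∂μ, ∀ i j : Fin d, S₀ (X ω) i j = S₀ (X ω) j i := by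
    rw [ae_all_iff]
    intro i
    rw [ae_all_iff]
    intro j
    have h1 := hS₀ce i j
    have h2 := hS₀ce j i
    have heq : (fun ω => Z ω i * Z ω j) = fun ω => Z ω j * Z ω i :=
      funext fun ω => mul_comm _ _
    rw [heq] at h1
    exact h1.trans h2.symm
  -- Step 5: a.s. pointwise identification
  have step5 : ∫ ω, u (X ω) ⬝ᵥ (S₀ (X ω)).mulVec (f₀ (X ω)) ∂μ =
      ∫ ω, f₀ (X ω) ⬝ᵥ π (X ω) ∂μ := by
    refine integral_congr_ae ?_
    filter_upwards [hPen, hπcol, hsym] with ω hpen ⟨w, hw⟩ hs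
    have hsT : (S₀ (X ω))ᵀ = S₀ (X ω) := Matrix.ext fun i j => hs j i
    exact alg_key (S₀ (X ω)) (G (X ω)) hsT hpen.1 (f₀ (X ω)) (π (X ω)) w hw
  calc ∫ ω, (G (X ω)).mulVec (C ω • Z ω) ⬝ᵥ π (X ω) ∂μ
      = ∫ ω, v ω * C ω ∂μ := by simp_rw [step0]
    _ = ∫ ω, v ω * (Z ω ⬝ᵥ f₀ (X ω)) ∂μ := step1
    _ = ∫ ω, (∑ i, ∑ j, (u (X ω) i * f₀ (X ω) j) * (Z ω i * Z ω j)) ∂μ := by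
        simp_rw [step2]
    _ = ∫ ω, (∑ i, ∑ j, (u (X ω) i * f₀ (X ω) j) * S₀ (X ω) i j) ∂μ := step3
    _ = ∫ ω, u (X ω) ⬝ᵥ (S₀ (X ω)).mulVec (f₀ (X ω)) ∂μ := by simp_rw [step4]
    _ = ∫ ω, f₀ (X ω) ⬝ᵥ π (X ω) ∂μ := step5
end

section
/- Assume ignorability. For any bounded measurable f : ℝ^p → ℝ^d, any bounded measurable H : ℝ^p → ℝ^{d×d}, and any policy π: E[(f(X) + H(X) Z (C − Zᵀ f(X)))ᵀ π(X)] − E[f₀(X)ᵀ π(X)] = E[π(X)ᵀ (I − H(X) Σ₀(X)) (f(X) − f₀(X))]. -/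
open MeasureTheory Matrix

section BddAux

variable {Ω : Type*} [MeasurableSpace Ω] {μ : Measure Ω}

/-- A bounded measurable real-valued function. -/
def BddM {Ω : Type*} [MeasurableSpace Ω] (g : Ω → ℝ) : Prop :=
  Measurable g ∧ ∃ M, ∀ ω, |g ω| ≤ M

theorem BddM.zero : BddM (fun _ : Ω => (0 : ℝ)) :=
  ⟨measurable_const, 0, fun _ => by simp⟩

theorem BddM.add {g h : Ω → ℝ} (hg : BddM g) (hh : BddM h) :
    BddM (fun ω => g ω + h ω) := by
  obtain ⟨hgm, Mg, hgb⟩ := hg; obtain ⟨hhm, Mh, hhb⟩ := hh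
  exact ⟨hgm.add hhm, Mg + Mh, fun ω =>
    (abs_add_le _ _).trans (add_le_add (hgb ω) (hhb ω))⟩

theorem BddM.sub {g h : Ω → ℝ} (hg : BddM g) (hh : BddM h) :
    BddM (fun ω => g ω - h ω) := by
  obtain ⟨hgm, Mg, hgb⟩ := hg; obtain ⟨hhm, Mh, hhb⟩ := hh
  exact ⟨hgm.sub hhm, Mg + Mh, fun ω =>
    (abs_sub _ _).trans (add_le_add (hgb ω) (hhb ω))⟩

theorem BddM.mul {g h : Ω → ℝ} (hg : BddM g) (hh : BddM h) :
    BddM (fun ω => g ω * h ω) := by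
  obtain ⟨hgm, Mg, hgb⟩ := hg; obtain ⟨hhm, Mh, hhb⟩ := hh
  refine ⟨hgm.mul hhm, Mg * Mh, fun ω => ?_⟩
  rw [abs_mul]
  exact mul_le_mul (hgb ω) (hhb ω) (abs_nonneg _) ((abs_nonneg _).trans (hgb ω))

theorem BddM.finsum {ι : Type*} {s : Finset ι} {g : ι → Ω → ℝ}
    (h : ∀ i ∈ s, BddM (g i)) : BddM (fun ω => ∑ i ∈ s, g i ω) := by
  classical
  induction s using Finset.induction_on with
  | empty => simpa using BddM.zero
  | insert _ _ hne ih =>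
    rename_i a s
    simp only [Finset.sum_insert hne]
    exact (h a (Finset.mem_insert_self _ _)).add
      (ih fun i hi => h i (Finset.mem_insert_of_mem hi))

theorem BddM.integrable [IsFiniteMeasure μ] {g : Ω → ℝ} (hg : BddM g) :
    Integrable g μ := by
  obtain ⟨hm, M, hb⟩ := hg
  exact (integrable_const M).mono' hm.aestronglyMeasurable
    (Filter.Eventually.of_forall (by simpa [Real.norm_eq_abs] using hb))

/-- Pulling inside a conditional expectation under an integral against a
bounded `m`-measurable factor. -/
theorem integral_mul_condexp_eq {Ω : Type*} {m m0 : MeasurableSpace Ω} (hm : m ≤ m0)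
    {μ : @Measure Ω m0} [IsProbabilityMeasure μ]
    {ψ h h' : Ω → ℝ} (hψ : StronglyMeasurable[m] ψ)
    (hψh : Integrable (fun ω => ψ ω * h ω) μ) (hh : Integrable h μ)
    (hce : h' =ᵐ[μ] μ[h|m]) :
    ∫ ω, ψ ω * h ω ∂μ = ∫ ω, ψ ω * h' ω ∂μ := by
  have hψh' : Integrable (ψ * h) μ := hψh
  have h1 : μ[ψ * h|m] =ᵐ[μ] ψ * μ[h|m] :=
    condExp_mul_of_stronglyMeasurable_left hψ hψh' hh
  have h2 : ∫ ω, (μ[ψ * h|m]) ω ∂μ = ∫ ω, ψ ω * h ω ∂μ := integral_condExp (f := ψ * h) (μ := μ) hm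
  rw [← h2]
  refine integral_congr_ae ?_
  filter_upwards [h1, hce] with ω e1 e2
  rw [e1, Pi.mul_apply, e2]

end BddAux

/-- The bias identity for the doubly robust score (from the proofs of Propositions 1
and 2): under ignorability, for any bounded measurable `f`, `H` and any policy `π`,
`E[(f(X) + H(X) Z (C - Zᵀ f(X)))ᵀ π(X)] - E[f₀(X)ᵀ π(X)]
  = E[π(X)ᵀ (I - H(X) Σ₀(X)) (f(X) - f₀(X))]`. -/
theorem stmt12 {Ω : Type*} [MeasurableSpace Ω] (μ : Measure Ω) [IsProbabilityMeasure μ]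
    {p d : ℕ} (X : Ω → Fin p → ℝ) (Z Y : Ω → Fin d → ℝ)
    (hX : Measurable X) (hZ : Measurable Z) (hY : Measurable Y)
    (hZb : ∃ M, ∀ ω, ‖Z ω‖ ≤ M) (hYb : ∃ M, ∀ ω, ‖Y ω‖ ≤ M)
    (C : Ω → ℝ) (hC : ∀ ω, C ω = Z ω ⬝ᵥ Y ω)
    (f₀ : (Fin p → ℝ) → Fin d → ℝ) (hf₀ : Measurable f₀) (hf₀b : ∃ M, ∀ x, ‖f₀ x‖ ≤ M)
    (hf₀ce : ∀ j, (fun ω => f₀ (X ω) j) =ᵐ[μ]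
      μ[(fun ω => Y ω j) | MeasurableSpace.comap X inferInstance])
    (S₀ : (Fin p → ℝ) → Matrix (Fin d) (Fin d) ℝ)
    (hS₀ : ∀ i j, Measurable fun x => S₀ x i j)
    (hS₀b : ∃ M, ∀ x i j, |S₀ x i j| ≤ M)
    (hS₀ce : ∀ i j, (fun ω => S₀ (X ω) i j) =ᵐ[μ]
      μ[(fun ω => Z ω i * Z ω j) | MeasurableSpace.comap X inferInstance])
    (hIgn : (fun ω => Z ω ⬝ᵥ f₀ (X ω)) =ᵐ[μ]
      μ[C | MeasurableSpace.comap (fun ω => (X ω, Z ω)) inferInstance])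
    (f : (Fin p → ℝ) → Fin d → ℝ) (hf : Measurable f) (hfb : ∃ M, ∀ x, ‖f x‖ ≤ M)
    (H : (Fin p → ℝ) → Matrix (Fin d) (Fin d) ℝ)
    (hH : ∀ i j, Measurable fun x => H x i j)
    (hHb : ∃ M, ∀ x i j, |H x i j| ≤ M)
    (π : (Fin p → ℝ) → Fin d → ℝ) (hπ : Measurable π) (hπb : ∃ M, ∀ x, ‖π x‖ ≤ M) :
    (∫ ω, (f (X ω) + (H (X ω)).mulVec ((C ω - Z ω ⬝ᵥ f (X ω)) • Z ω)) ⬝ᵥ π (X ω) ∂μ) -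
        ∫ ω, f₀ (X ω) ⬝ᵥ π (X ω) ∂μ =
      ∫ ω, π (X ω) ⬝ᵥ (1 - H (X ω) * S₀ (X ω)).mulVec (f (X ω) - f₀ (X ω)) ∂μ := by
  classical
  obtain ⟨MZ, hMZ⟩ := hZb
  obtain ⟨MY, hMY⟩ := hYb
  obtain ⟨Mf₀, hMf₀⟩ := hf₀b
  obtain ⟨MS, hMS⟩ := hS₀b
  obtain ⟨Mf, hMf⟩ := hfb
  obtain ⟨MH, hMH⟩ := hHb
  obtain ⟨Mπ, hMπ⟩ := hπb
  -- the two sub-σ-algebras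
  have hm₁ : MeasurableSpace.comap X inferInstance ≤ ‹MeasurableSpace Ω› := hX.comap_le
  have hm₂ : MeasurableSpace.comap (fun ω => (X ω, Z ω)) inferInstance ≤
      ‹MeasurableSpace Ω› := (hX.prodMk hZ).comap_le
  -- abbreviations
  set v : (Fin p → ℝ) → Fin d → ℝ := fun x => f₀ x - f x with hv
  set w : (Fin p → ℝ) → Fin d → ℝ := fun x j => ∑ i, π x i * H x i j with hw
  set φ : Ω → ℝ := fun ω => w (X ω) ⬝ᵥ Z ω with hφ
  have hwv : ∀ x, Matrix.vecMul (π x) (H x) = w x := by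
    intro x; funext j; simp [Matrix.vecMul, dotProduct, hw]
  -- bounded measurable atoms
  have bZ : ∀ j, BddM (fun ω => Z ω j) := fun j =>
    ⟨(measurable_pi_apply j).comp hZ, MZ, fun ω => by
      simpa using (norm_le_pi_norm (Z ω) j).trans (hMZ ω)⟩
  have bY : ∀ j, BddM (fun ω => Y ω j) := fun j =>
    ⟨(measurable_pi_apply j).comp hY, MY, fun ω => by
      simpa using (norm_le_pi_norm (Y ω) j).trans (hMY ω)⟩
  have bC : BddM C := by
    have hCe : C = fun ω => ∑ j, Z ω j * Y ω j := funext fun ω => hC ω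
    rw [hCe]
    exact BddM.finsum fun j _ => (bZ j).mul (bY j)
  have bfX : ∀ k, BddM (fun ω => f (X ω) k) := fun k =>
    ⟨((measurable_pi_apply k).comp hf).comp hX, Mf, fun ω => by
      simpa using (norm_le_pi_norm (f (X ω)) k).trans (hMf (X ω))⟩
  have bf₀X : ∀ k, BddM (fun ω => f₀ (X ω) k) := fun k =>
    ⟨((measurable_pi_apply k).comp hf₀).comp hX, Mf₀, fun ω => by
      simpa using (norm_le_pi_norm (f₀ (X ω)) k).trans (hMf₀ (X ω))⟩
  have bπX : ∀ k, BddM (fun ω => π (X ω) k) := fun k =>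
    ⟨((measurable_pi_apply k).comp hπ).comp hX, Mπ, fun ω => by
      simpa using (norm_le_pi_norm (π (X ω)) k).trans (hMπ (X ω))⟩
  have bHX : ∀ i j, BddM (fun ω => H (X ω) i j) := fun i j =>
    ⟨(hH i j).comp hX, MH, fun ω => hMH (X ω) i j⟩
  have bSX : ∀ i j, BddM (fun ω => S₀ (X ω) i j) := fun i j =>
    ⟨(hS₀ i j).comp hX, MS, fun ω => hMS (X ω) i j⟩
  have bwX : ∀ j, BddM (fun ω => w (X ω) j) := fun j =>
    BddM.finsum fun i _ => (bπX i).mul (bHX i j)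
  have bvX : ∀ k, BddM (fun ω => v (X ω) k) := fun k => (bf₀X k).sub (bfX k)
  have bφ : BddM φ := BddM.finsum fun j _ => (bwX j).mul (bZ j)
  -- strong measurability w.r.t. the sub-σ-algebras
  have hφm : StronglyMeasurable[MeasurableSpace.comap (fun ω => (X ω, Z ω)) inferInstance] φ := by
    have hinner : Measurable[MeasurableSpace.comap (fun ω => (X ω, Z ω)) inferInstance]
        (fun ω => (X ω, Z ω)) := Measurable.of_comap_le le_rfl
    have hΨ : Measurable (fun q : (Fin p → ℝ) × (Fin d → ℝ) => w q.1 ⬝ᵥ q.2) := by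
      apply Finset.measurable_sum
      intro j _
      exact (Finset.measurable_sum _ fun i _ =>
        (((measurable_pi_apply i).comp hπ).comp measurable_fst).mul
          ((hH i j).comp measurable_fst)).mul
        ((measurable_pi_apply j).comp measurable_snd)
    exact (hΨ.comp hinner).stronglyMeasurable
  have hgm : ∀ j k : Fin d, StronglyMeasurable[MeasurableSpace.comap X inferInstance]
      (fun ω => w (X ω) j * v (X ω) k) := by
    intro j k
    have hXm : Measurable[MeasurableSpace.comap X inferInstance] X :=
      Measurable.of_comap_le le_rfl
    have hg : Measurable (fun x => w x j * v x k) :=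
      (Finset.measurable_sum _ fun i _ =>
        ((measurable_pi_apply i).comp hπ).mul (hH i j)).mul
        (((measurable_pi_apply k).comp hf₀).sub ((measurable_pi_apply k).comp hf))
    exact (hg.comp hXm).stronglyMeasurable
  -- Step 1: the ignorability cancellation
  have key1 : ∫ ω, φ ω * C ω ∂μ = ∫ ω, φ ω * (Z ω ⬝ᵥ f₀ (X ω)) ∂μ :=
    integral_mul_condexp_eq hm₂ hφm (bφ.mul bC).integrable bC.integrable hIgn
  -- Step 2: replacing Z_j Z_k by S₀ under the integral
  have bZZf₀ : BddM (fun ω => Z ω ⬝ᵥ f₀ (X ω)) :=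
    BddM.finsum fun j _ => (bZ j).mul (bf₀X j)
  have key2 : ∀ j k : Fin d,
      ∫ ω, (w (X ω) j * v (X ω) k) * (Z ω j * Z ω k) ∂μ
        = ∫ ω, (w (X ω) j * v (X ω) k) * S₀ (X ω) j k ∂μ := fun j k =>
    integral_mul_condexp_eq hm₁ (hgm j k)
      (((bwX j).mul (bvX k)).mul ((bZ j).mul (bZ k))).integrable
      ((bZ j).mul (bZ k)).integrable (hS₀ce j k)
  -- pointwise decomposition of the first integrand
  have hA : ∀ ω, (f (X ω) + (H (X ω)).mulVec ((C ω - Z ω ⬝ᵥ f (X ω)) • Z ω)) ⬝ᵥ π (X ω)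
      = f (X ω) ⬝ᵥ π (X ω) + (φ ω * C ω - φ ω * (Z ω ⬝ᵥ f₀ (X ω)))
        + ∑ j, ∑ k, (w (X ω) j * v (X ω) k) * (Z ω j * Z ω k) := by
    intro ω
    have e1 : (H (X ω)).mulVec ((C ω - Z ω ⬝ᵥ f (X ω)) • Z ω) ⬝ᵥ π (X ω)
        = (C ω - Z ω ⬝ᵥ f (X ω)) * φ ω := by
      rw [Matrix.mulVec_smul, smul_dotProduct, smul_eq_mul]
      congr 1
      rw [dotProduct_comm, Matrix.dotProduct_mulVec, hwv]
    have e3 : (Z ω ⬝ᵥ v (X ω)) * φ ω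
        = ∑ j, ∑ k, (w (X ω) j * v (X ω) k) * (Z ω j * Z ω k) := by
      show (∑ k, Z ω k * v (X ω) k) * (∑ j, w (X ω) j * Z ω j) = _
      rw [Finset.sum_mul_sum, Finset.sum_comm]
      exact Finset.sum_congr rfl fun j _ => Finset.sum_congr rfl fun k _ => by ring
    have e2 : Z ω ⬝ᵥ v (X ω) = Z ω ⬝ᵥ f₀ (X ω) - Z ω ⬝ᵥ f (X ω) := by
      rw [hv]; exact dotProduct_sub _ _ _
    rw [add_dotProduct, e1, ← e3, e2]
    ring
  -- pointwise form of the replaced sum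
  have e4 : ∀ ω, (∑ j, ∑ k, (w (X ω) j * v (X ω) k) * S₀ (X ω) j k)
      = π (X ω) ⬝ᵥ (H (X ω) * S₀ (X ω)).mulVec (v (X ω)) := by
    intro ω
    rw [← Matrix.mulVec_mulVec, Matrix.dotProduct_mulVec, hwv]
    show _ = ∑ j, w (X ω) j * ((S₀ (X ω)).mulVec (v (X ω)) j)
    refine Finset.sum_congr rfl fun j _ => ?_
    show (∑ k, (w (X ω) j * v (X ω) k) * S₀ (X ω) j k)
        = w (X ω) j * ∑ k, S₀ (X ω) j k * v (X ω) k
    rw [Finset.mul_sum]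
    exact Finset.sum_congr rfl fun k _ => by ring
  -- pointwise form of the RHS integrand
  have e5 : ∀ ω, π (X ω) ⬝ᵥ (1 - H (X ω) * S₀ (X ω)).mulVec (f (X ω) - f₀ (X ω))
      = (f (X ω) ⬝ᵥ π (X ω) - f₀ (X ω) ⬝ᵥ π (X ω))
        + π (X ω) ⬝ᵥ (H (X ω) * S₀ (X ω)).mulVec (v (X ω)) := by
    intro ω
    have h1 : f (X ω) - f₀ (X ω) = -(v (X ω)) := by rw [hv]; simp
    have h2 : π (X ω) ⬝ᵥ v (X ω) = f₀ (X ω) ⬝ᵥ π (X ω) - f (X ω) ⬝ᵥ π (X ω) := by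
      rw [dotProduct_comm]
      simp only [hv]
      exact sub_dotProduct _ _ _
    rw [h1, Matrix.sub_mulVec, Matrix.one_mulVec, Matrix.mulVec_neg, dotProduct_sub,
      dotProduct_neg, dotProduct_neg, h2]
    ring
  -- integrabilities
  have bfπ : BddM (fun ω => f (X ω) ⬝ᵥ π (X ω)) :=
    BddM.finsum fun i _ => (bfX i).mul (bπX i)
  have bf₀π : BddM (fun ω => f₀ (X ω) ⬝ᵥ π (X ω)) :=
    BddM.finsum fun i _ => (bf₀X i).mul (bπX i)
  have bres : BddM (fun ω => φ ω * C ω - φ ω * (Z ω ⬝ᵥ f₀ (X ω))) :=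
    (bφ.mul bC).sub (bφ.mul bZZf₀)
  have bt : ∀ j k : Fin d, BddM (fun ω => (w (X ω) j * v (X ω) k) * (Z ω j * Z ω k)) :=
    fun j k => ((bwX j).mul (bvX k)).mul ((bZ j).mul (bZ k))
  have bts : BddM (fun ω => ∑ j, ∑ k, (w (X ω) j * v (X ω) k) * (Z ω j * Z ω k)) :=
    BddM.finsum fun j _ => BddM.finsum fun k _ => bt j k
  have bHS : BddM (fun ω => π (X ω) ⬝ᵥ (H (X ω) * S₀ (X ω)).mulVec (v (X ω))) := by
    have : ∀ ω, π (X ω) ⬝ᵥ (H (X ω) * S₀ (X ω)).mulVec (v (X ω))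
        = ∑ j, ∑ k, (w (X ω) j * v (X ω) k) * S₀ (X ω) j k := fun ω => (e4 ω).symm
    rw [show (fun ω => π (X ω) ⬝ᵥ (H (X ω) * S₀ (X ω)).mulVec (v (X ω)))
        = fun ω => ∑ j, ∑ k, (w (X ω) j * v (X ω) k) * S₀ (X ω) j k from funext this]
    exact BddM.finsum fun j _ => BddM.finsum fun k _ =>
      ((bwX j).mul (bvX k)).mul (bSX j k)
  -- compute the first integral
  have hIA : (∫ ω, (f (X ω) + (H (X ω)).mulVec ((C ω - Z ω ⬝ᵥ f (X ω)) • Z ω)) ⬝ᵥ π (X ω) ∂μ)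
      = (∫ ω, f (X ω) ⬝ᵥ π (X ω) ∂μ)
        + ((∫ ω, φ ω * C ω ∂μ) - ∫ ω, φ ω * (Z ω ⬝ᵥ f₀ (X ω)) ∂μ)
        + ∑ j, ∑ k, ∫ ω, (w (X ω) j * v (X ω) k) * (Z ω j * Z ω k) ∂μ := by
    rw [integral_congr_ae (Filter.Eventually.of_forall hA)]
    rw [integral_add ((bfπ.add bres).integrable) bts.integrable,
      integral_add bfπ.integrable bres.integrable,
      integral_sub (bφ.mul bC).integrable (bφ.mul bZZf₀).integrable,
      integral_finset_sum _ fun j _ => (BddM.finsum fun k _ => bt j k).integrable]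
    congr 1
    exact Finset.sum_congr rfl fun j _ =>
      integral_finset_sum _ fun k _ => (bt j k).integrable
  -- replace the double sum using key2 and e4
  have hsum : (∑ j, ∑ k, ∫ ω, (w (X ω) j * v (X ω) k) * (Z ω j * Z ω k) ∂μ)
      = ∫ ω, π (X ω) ⬝ᵥ (H (X ω) * S₀ (X ω)).mulVec (v (X ω)) ∂μ := by
    have : (∑ j, ∑ k, ∫ ω, (w (X ω) j * v (X ω) k) * (Z ω j * Z ω k) ∂μ)
        = ∑ j, ∑ k, ∫ ω, (w (X ω) j * v (X ω) k) * S₀ (X ω) j k ∂μ :=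
      Finset.sum_congr rfl fun j _ => Finset.sum_congr rfl fun k _ => key2 j k
    rw [this]
    rw [← integral_congr_ae (Filter.Eventually.of_forall e4)]
    rw [integral_finset_sum _ fun j _ => (BddM.finsum fun k _ =>
      ((bwX j).mul (bvX k)).mul (bSX j k)).integrable]
    exact Finset.sum_congr rfl fun j _ =>
      (integral_finset_sum _ fun k _ => (((bwX j).mul (bvX k)).mul (bSX j k)).integrable).symm
  -- compute the RHS integral
  have hRHS : (∫ ω, π (X ω) ⬝ᵥ (1 - H (X ω) * S₀ (X ω)).mulVec (f (X ω) - f₀ (X ω)) ∂μ)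
      = ((∫ ω, f (X ω) ⬝ᵥ π (X ω) ∂μ) - ∫ ω, f₀ (X ω) ⬝ᵥ π (X ω) ∂μ)
        + ∫ ω, π (X ω) ⬝ᵥ (H (X ω) * S₀ (X ω)).mulVec (v (X ω)) ∂μ := by
    rw [integral_congr_ae (Filter.Eventually.of_forall e5)]
    rw [integral_add (bfπ.sub bf₀π).integrable bHS.integrable,
      integral_sub bfπ.integrable bf₀π.integrable]
  rw [hIA, key1, hsum, hRHS]
  ring
end

section
/- For any one-hot policy π̃, we have E[Σ_{j=1}^m (1{Z = z_j} / e_j(X)) · C · π̃_j(X)] = V(π̃). -/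
open MeasureTheory Matrix

set_option maxHeartbeats 1000000

section Helpers
variable {Ω : Type*} [m0 : MeasurableSpace Ω] {μ : Measure Ω}

/-- integral pull-out: `∫ f*g = ∫ f * E[g|m]`. -/
lemma integral_mul_condexp {m : MeasurableSpace Ω} (hm : m ≤ m0) [SigmaFinite (μ.trim hm)]
    {f g : Ω → ℝ} (hf : StronglyMeasurable[m] f) (hfg : Integrable (fun ω => f ω * g ω) μ)
    (hg : Integrable g μ) :
    ∫ ω, f ω * g ω ∂μ = ∫ ω, f ω * (μ[g|m]) ω ∂μ := by
  have h1 : ∫ ω, f ω * g ω ∂μ = ∫ ω, (μ[(fun ω => f ω * g ω)|m]) ω ∂μ :=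
    (integral_condExp hm).symm
  rw [h1]
  refine integral_congr_ae ?_
  exact (condExp_mul_of_stronglyMeasurable_left hf hfg hg).mono fun ω hω => hω

lemma integrable_div_condexp [IsProbabilityMeasure μ] {m : MeasurableSpace Ω} (hm : m ≤ m0)
    {B q : Ω → ℝ} (hB : Measurable[m0] B) (hB0 : ∀ ω, 0 ≤ B ω) (hB1 : ∀ ω, B ω ≤ 1)
    (hq : Measurable[m] q) (hqe : q =ᵐ[μ] μ[B|m]) (hqpos : ∀ᵐ ω ∂μ, 0 < q ω) :
    Integrable (fun ω => B ω / q ω) μ := by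
  have hone : Integrable (fun _ : Ω => (1:ℝ)) μ := integrable_const 1
  have hBint : Integrable B μ :=
    hone.mono' (hB.aestronglyMeasurable (μ := μ))
      (ae_of_all _ fun ω => by rw [Real.norm_eq_abs, abs_of_nonneg (hB0 ω)]; exact hB1 ω)
  set qn : ℕ → Ω → ℝ := fun n ω => max 0 (min (1 / q ω) n) with hqn
  have hqn_meas : ∀ n, Measurable[m] (qn n) := fun n =>
    measurable_const.max ((hq.const_div 1).min measurable_const)
  have hqn_meas0 : ∀ n, Measurable[m0] (qn n) := fun n => (hqn_meas n).mono hm le_rfl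
  have hqn_nonneg : ∀ n ω, 0 ≤ qn n ω := fun n ω => le_max_left _ _
  have hqn_le : ∀ n ω, qn n ω ≤ n := fun n ω =>
    max_le (Nat.cast_nonneg n) (min_le_right _ _)
  set a : ℕ → Ω → ℝ := fun n ω => qn n ω * B ω with ha
  have ha_meas : ∀ n, Measurable[m0] (a n) := fun n => (hqn_meas0 n).mul hB
  have ha_int : ∀ n, Integrable (a n) μ := by
    intro n
    have hn1 : Integrable (fun _ : Ω => (n:ℝ)) μ := integrable_const _
    refine hn1.mono' ((ha_meas n).aestronglyMeasurable (μ := μ))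
      (ae_of_all _ fun ω => ?_)
    rw [Real.norm_eq_abs, abs_of_nonneg (mul_nonneg (hqn_nonneg n ω) (hB0 ω))]
    calc qn n ω * B ω ≤ qn n ω * 1 :=
          mul_le_mul_of_nonneg_left (hB1 ω) (hqn_nonneg n ω)
      _ ≤ n := by rw [mul_one]; exact hqn_le n ω
  have ha_le : ∀ n, ∫ ω, a n ω ∂μ ≤ 1 := by
    intro n
    haveI : SigmaFinite (μ.trim hm) :=
      @IsFiniteMeasure.toSigmaFinite _ m _ (isFiniteMeasure_trim hm)
    have h1 : ∫ ω, a n ω ∂μ = ∫ ω, qn n ω * (μ[B|m]) ω ∂μ :=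
      integral_mul_condexp (m0 := m0) hm (hqn_meas n).stronglyMeasurable (ha_int n) hBint
    have h2 : ∫ ω, qn n ω * (μ[B|m]) ω ∂μ = ∫ ω, qn n ω * q ω ∂μ :=
      integral_congr_ae (hqe.mono fun ω hω => by dsimp only; rw [hω])
    rw [h1, h2]
    have hint1 : Integrable (fun ω => qn n ω * (μ[B|m]) ω) μ :=
      (integrable_condExp).bdd_mul ((hqn_meas0 n).aestronglyMeasurable (μ := μ))
        (ae_of_all _ fun ω => by
          rw [Real.norm_eq_abs, abs_of_nonneg (hqn_nonneg n ω)]; exact hqn_le n ω)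
    have hint2 : Integrable (fun ω => qn n ω * q ω) μ :=
      hint1.congr (hqe.mono fun ω hω => by dsimp only; rw [hω])
    calc ∫ ω, qn n ω * q ω ∂μ ≤ ∫ ω, (1:ℝ) ∂μ := by
          refine integral_mono_ae hint2 hone ?_
          filter_upwards [hqpos] with ω hω
          have h1q : qn n ω ≤ 1 / q ω := by
            refine max_le ?_ (min_le_left _ _)
            positivity
          calc qn n ω * q ω ≤ (1 / q ω) * q ω :=
                mul_le_mul_of_nonneg_right h1q hω.le
            _ = 1 := by field_simp
      _ = 1 := by simp
  have hmono : ∀ ω, Monotone fun n => a n ω := by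
    intro ω n k hnk
    exact mul_le_mul_of_nonneg_right
      (max_le_max le_rfl (min_le_min le_rfl (by exact_mod_cast hnk))) (hB0 ω)
  have hsup : ∀ᵐ ω ∂μ, (⨆ n, ENNReal.ofReal (a n ω)) = ENNReal.ofReal (B ω / q ω) := by
    filter_upwards [hqpos] with ω hω
    have hlim : a ⌈1 / q ω⌉₊ ω = B ω / q ω := by
      have h1 : min (1 / q ω) ((⌈1 / q ω⌉₊ : ℕ) : ℝ) = 1 / q ω :=
        min_eq_left (Nat.le_ceil _)
      have h2 : qn ⌈1 / q ω⌉₊ ω = 1 / q ω := by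
        rw [hqn]; dsimp only; rw [h1, max_eq_right (by positivity)]
      rw [ha]; dsimp only; rw [h2]; field_simp
    refine le_antisymm (iSup_le fun n => ?_) ?_
    · refine ENNReal.ofReal_le_ofReal ?_
      have h1q : qn n ω ≤ 1 / q ω := max_le (by positivity) (min_le_left _ _)
      calc a n ω ≤ (1 / q ω) * B ω := mul_le_mul_of_nonneg_right h1q (hB0 ω)
        _ = B ω / q ω := by rw [one_div, mul_comm, div_eq_mul_inv]
    · rw [← hlim]
      exact le_iSup (fun n => ENNReal.ofReal (a n ω)) _
  have hlint : ∫⁻ ω, ENNReal.ofReal (B ω / q ω) ∂μ ≤ 1 := by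
    rw [← lintegral_congr_ae hsup]
    rw [lintegral_iSup (fun n => (ha_meas n).ennreal_ofReal)
      (fun n k hnk ω => ENNReal.ofReal_le_ofReal (hmono ω hnk))]
    refine iSup_le fun n => ?_
    have h0 := ofReal_integral_eq_lintegral_ofReal (ha_int n)
      (ae_of_all _ fun ω => mul_nonneg (hqn_nonneg n ω) (hB0 ω))
    rw [← h0]
    calc ENNReal.ofReal (∫ ω, a n ω ∂μ) ≤ ENNReal.ofReal 1 :=
          ENNReal.ofReal_le_ofReal (ha_le n)
      _ = 1 := ENNReal.ofReal_one
  have hmeas : Measurable[m0] (fun ω => B ω / q ω) := hB.div (hq.mono hm le_rfl)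
  refine ⟨hmeas.aestronglyMeasurable (μ := μ), ?_⟩
  rw [hasFiniteIntegral_iff_ofReal ?_]
  · exact lt_of_le_of_lt hlint ENNReal.one_lt_top
  · filter_upwards [hqpos] with ω hω
    exact div_nonneg (hB0 ω) hω.le

lemma key_term {Ω : Type*} [m0 : MeasurableSpace Ω] (μ : Measure Ω) [IsProbabilityMeasure μ]
    {p d m : ℕ} (X : Ω → Fin p → ℝ) (hX : Measurable[m0] X)
    (z : Fin m → Fin d → ℝ) (hz : Function.Injective z)
    (Z : Ω → Fin d → ℝ) (hZ : Measurable[m0] Z)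
    (C : Ω → ℝ) (hC : Measurable[m0] C) (MC : ℝ) (hMC : ∀ ω, |C ω| ≤ MC)
    (e : (Fin p → ℝ) → Fin m → ℝ) (he : Measurable e)
    (g : (Fin p → ℝ) → Fin m → ℝ) (hg : Measurable g) (Mg : ℝ) (hMg : ∀ x, ‖g x‖ ≤ Mg)
    (pol : (Fin p → ℝ) → Fin m → ℝ) (hpol : Measurable pol)
    (hpol01 : ∀ x j, pol x j = 0 ∨ pol x j = 1)
    (j : Fin m)
    (hece_j : (fun ω => e (X ω) j) =ᵐ[μ]
      μ[(fun ω => if Z ω = z j then (1 : ℝ) else 0) | MeasurableSpace.comap X inferInstance])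
    (hepos_j : ∀ᵐ ω ∂μ, 0 < e (X ω) j)
    (hgce : (fun ω => ∑ k, (if Z ω = z k then (1 : ℝ) else 0) * g (X ω) k) =ᵐ[μ]
      μ[C | MeasurableSpace.comap (fun ω => (X ω, Z ω)) inferInstance]) :
    Integrable (fun ω => (if Z ω = z j then (1 : ℝ) else 0) / e (X ω) j * C ω * pol (X ω) j) μ ∧
    ∫ ω, (if Z ω = z j then (1 : ℝ) else 0) / e (X ω) j * C ω * pol (X ω) j ∂μ
      = ∫ ω, pol (X ω) j * g (X ω) j ∂μ := by
  have hpolb : ∀ x k, |pol x k| ≤ 1 := by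
    intro x k; rcases hpol01 x k with h | h <;> rw [h] <;> norm_num
  have hgbj : ∀ x, |g x j| ≤ Mg := fun x =>
    le_trans (by simpa using norm_le_pi_norm (g x) j) (hMg x)
  set B : Ω → ℝ := fun ω => if Z ω = z j then (1 : ℝ) else 0 with hBdef
  set q : Ω → ℝ := fun ω => e (X ω) j with hqdef
  have hmX : MeasurableSpace.comap X inferInstance ≤ m0 := hX.comap_le
  have hmXZ : MeasurableSpace.comap (fun ω => (X ω, Z ω)) inferInstance ≤ m0 :=
    (hX.prodMk hZ).comap_le
  haveI : SigmaFinite (μ.trim hmX) :=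
    @IsFiniteMeasure.toSigmaFinite _ _ _ (isFiniteMeasure_trim hmX)
  haveI : SigmaFinite (μ.trim hmXZ) :=
    @IsFiniteMeasure.toSigmaFinite _ _ _ (isFiniteMeasure_trim hmXZ)
  have hBmeas : Measurable[m0] B :=
    Measurable.ite (hZ (measurableSet_singleton (z j))) measurable_const measurable_const
  have hB0 : ∀ ω, 0 ≤ B ω := fun ω => by rw [hBdef]; dsimp only; split_ifs <;> norm_num
  have hB1 : ∀ ω, B ω ≤ 1 := fun ω => by rw [hBdef]; dsimp only; split_ifs <;> norm_num
  have hqX : Measurable[MeasurableSpace.comap X inferInstance] q :=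
    ((measurable_pi_apply j).comp he).comp (Measurable.of_comap_le le_rfl)
  have hint0 : Integrable (fun ω => B ω / q ω) μ :=
    integrable_div_condexp hmX hBmeas hB0 hB1 hqX hece_j hepos_j
  have hCint : Integrable C μ := by
    have : Integrable (fun _ : Ω => MC) μ := integrable_const _
    exact this.mono' (hC.aestronglyMeasurable (μ := μ))
      (ae_of_all _ fun ω => by rw [Real.norm_eq_abs]; exact hMC ω)
  have hBint : Integrable B μ := by
    have : Integrable (fun _ : Ω => (1:ℝ)) μ := integrable_const _
    exact this.mono' (hBmeas.aestronglyMeasurable (μ := μ))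
      (ae_of_all _ fun ω => by
        rw [Real.norm_eq_abs, abs_of_nonneg (hB0 ω)]; exact hB1 ω)
  -- the mXZ-measurable factor
  set h : Ω → ℝ := fun ω => B ω / q ω * pol (X ω) j with hhdef
  have hHmeas : Measurable[MeasurableSpace.comap (fun ω => (X ω, Z ω)) inferInstance] h := by
    have hpair : Measurable[MeasurableSpace.comap (fun ω => (X ω, Z ω)) inferInstance]
        (fun ω => (X ω, Z ω)) := Measurable.of_comap_le le_rfl
    have hφ : Measurable (fun xv : (Fin p → ℝ) × (Fin d → ℝ) =>
        (if xv.2 = z j then (1:ℝ) else 0) / e xv.1 j * pol xv.1 j) := by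
      refine Measurable.mul (Measurable.div ?_ ?_) ?_
      · exact Measurable.ite (measurable_snd (measurableSet_singleton (z j)))
          measurable_const measurable_const
      · exact (measurable_pi_apply j).comp (he.comp measurable_fst)
      · exact (measurable_pi_apply j).comp (hpol.comp measurable_fst)
    exact hφ.comp hpair
  have hHmeas0 : Measurable[m0] h := hHmeas.mono hmXZ le_rfl
  -- integrability of h * C
  have hHC_int : Integrable (fun ω => h ω * C ω) μ := by
    refine (hint0.const_mul MC).mono' ((hHmeas0.mul hC).aestronglyMeasurable (μ := μ)) ?_
    filter_upwards [hepos_j] with ω hω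
    rw [Real.norm_eq_abs, hhdef]
    dsimp only
    rw [abs_mul, abs_mul, abs_div, abs_of_nonneg (hB0 ω), abs_of_pos hω]
    calc B ω / q ω * |pol (X ω) j| * |C ω| ≤ B ω / q ω * 1 * MC := by
          apply mul_le_mul (mul_le_mul_of_nonneg_left (hpolb _ _) (div_nonneg (hB0 ω) hω.le))
            (hMC ω) (abs_nonneg _)
          positivity
      _ = MC * (B ω / q ω) := by ring
  -- step 1: condition on (X, Z)
  have e1 : ∫ ω, B ω / q ω * C ω * pol (X ω) j ∂μ = ∫ ω, h ω * C ω ∂μ :=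
    integral_congr_ae (ae_of_all _ fun ω => by rw [hhdef]; ring)
  have e2 : ∫ ω, h ω * C ω ∂μ =
      ∫ ω, h ω * (μ[C | MeasurableSpace.comap (fun ω => (X ω, Z ω)) inferInstance]) ω ∂μ :=
    integral_mul_condexp (m0 := m0) hmXZ hHmeas.stronglyMeasurable hHC_int hCint
  have e3 : ∫ ω, h ω * (μ[C | MeasurableSpace.comap (fun ω => (X ω, Z ω)) inferInstance]) ω ∂μ =
      ∫ ω, h ω * (∑ k, (if Z ω = z k then (1 : ℝ) else 0) * g (X ω) k) ∂μ :=
    integral_congr_ae (hgce.symm.mono fun ω hω => by dsimp only; rw [hω])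
  -- pointwise collapse of the sum
  set h' : Ω → ℝ := fun ω => pol (X ω) j * g (X ω) j / q ω with hh'def
  have e4 : ∀ ω, h ω * (∑ k, (if Z ω = z k then (1 : ℝ) else 0) * g (X ω) k) = h' ω * B ω := by
    intro ω
    by_cases hω : Z ω = z j
    · have hsum : (∑ k, (if Z ω = z k then (1:ℝ) else 0) * g (X ω) k) = g (X ω) j := by
        rw [Finset.sum_eq_single j]
        · rw [if_pos hω, one_mul]
        · intro k _ hkj
          rw [if_neg (fun h' => hkj (hz (hω.symm.trans h')).symm), zero_mul]
        · intro hj; exact absurd (Finset.mem_univ j) hj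
      rw [hsum, hhdef, hh'def, hBdef]
      dsimp only
      rw [if_pos hω]
      ring
    · rw [hhdef, hh'def, hBdef]
      dsimp only
      rw [if_neg hω]
      ring
  -- step 2: condition on X
  have hH'meas : Measurable[MeasurableSpace.comap X inferInstance] h' := by
    have hXm : Measurable[MeasurableSpace.comap X inferInstance] X :=
      Measurable.of_comap_le le_rfl
    exact ((((measurable_pi_apply j).comp hpol).mul
      ((measurable_pi_apply j).comp hg)).div ((measurable_pi_apply j).comp he)).comp hXm
  have hH'meas0 : Measurable[m0] h' := hH'meas.mono hmX le_rfl
  have hH'B_int : Integrable (fun ω => h' ω * B ω) μ := by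
    refine (hint0.const_mul Mg).mono' ((hH'meas0.mul hBmeas).aestronglyMeasurable (μ := μ)) ?_
    filter_upwards [hepos_j] with ω hω
    rw [Real.norm_eq_abs, hh'def]
    dsimp only
    rw [abs_mul, abs_div, abs_mul, abs_of_pos hω, abs_of_nonneg (hB0 ω)]
    have hMg0 : 0 ≤ Mg := le_trans (abs_nonneg _) (hgbj (X ω))
    have hnum : |pol (X ω) j| * |g (X ω) j| ≤ Mg := by
      calc |pol (X ω) j| * |g (X ω) j| ≤ 1 * Mg :=
            mul_le_mul (hpolb _ _) (hgbj _) (abs_nonneg _) zero_le_one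
        _ = Mg := one_mul Mg
    calc |pol (X ω) j| * |g (X ω) j| / q ω * B ω ≤ Mg / q ω * B ω :=
          mul_le_mul_of_nonneg_right ((div_le_div_iff_of_pos_right hω).2 hnum) (hB0 ω)
      _ = Mg * (B ω / q ω) := by ring
  have e5 : ∫ ω, h' ω * B ω ∂μ =
      ∫ ω, h' ω * (μ[B | MeasurableSpace.comap X inferInstance]) ω ∂μ :=
    integral_mul_condexp (m0 := m0) hmX hH'meas.stronglyMeasurable hH'B_int hBint
  have e6 : ∫ ω, h' ω * (μ[B | MeasurableSpace.comap X inferInstance]) ω ∂μ =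
      ∫ ω, h' ω * q ω ∂μ :=
    integral_congr_ae (hece_j.mono fun ω hω => by dsimp only; rw [← hω])
  have e7 : ∫ ω, h' ω * q ω ∂μ = ∫ ω, pol (X ω) j * g (X ω) j ∂μ := by
    refine integral_congr_ae ?_
    filter_upwards [hepos_j] with ω hω
    rw [hh'def]
    dsimp only
    rw [div_mul_cancel₀ _ (ne_of_gt hω)]
  constructor
  · exact hHC_int.congr (ae_of_all _ fun ω => by rw [hhdef]; dsimp only; ring)
  · calc ∫ ω, B ω / q ω * C ω * pol (X ω) j ∂μ = ∫ ω, h ω * C ω ∂μ := e1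
      _ = ∫ ω, h ω * (μ[C | MeasurableSpace.comap (fun ω => (X ω, Z ω)) inferInstance]) ω ∂μ := e2
      _ = ∫ ω, h ω * (∑ k, (if Z ω = z k then (1 : ℝ) else 0) * g (X ω) k) ∂μ := e3
      _ = ∫ ω, h' ω * B ω ∂μ := integral_congr_ae (ae_of_all _ e4)
      _ = ∫ ω, h' ω * (μ[B | MeasurableSpace.comap X inferInstance]) ω ∂μ := e5
      _ = ∫ ω, h' ω * q ω ∂μ := e6
      _ = ∫ ω, pol (X ω) j * g (X ω) j ∂μ := e7

end Helpers

/-- Lemma B.1 (inverse propensity weighting identification for the naive discrete-action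
formulation): for any one-hot policy `π̃`,
`E[∑ j, (1{Z = z_j} / e_j(X)) · C · π̃_j(X)] = V(π̃) = E[∑ j, π̃_j(X) g_j(X)]`. -/
theorem stmt14 {Ω : Type*} [MeasurableSpace Ω] (μ : Measure Ω) [IsProbabilityMeasure μ]
    {p d m : ℕ} (X : Ω → Fin p → ℝ) (hX : Measurable X)
    (z : Fin m → Fin d → ℝ) (hz : Function.Injective z)
    (Z : Ω → Fin d → ℝ) (hZ : Measurable Z) (hZval : ∀ ω, ∃ j, Z ω = z j)
    (C : Ω → ℝ) (hC : Measurable C) (hCb : ∃ M, ∀ ω, |C ω| ≤ M)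
    (e : (Fin p → ℝ) → Fin m → ℝ) (he : Measurable e)
    (hece : ∀ j, (fun ω => e (X ω) j) =ᵐ[μ]
      μ[(fun ω => if Z ω = z j then (1 : ℝ) else 0) | MeasurableSpace.comap X inferInstance])
    (hepos : ∀ j, ∀ᵐ ω ∂μ, 0 < e (X ω) j)
    (g : (Fin p → ℝ) → Fin m → ℝ) (hg : Measurable g) (hgb : ∃ M, ∀ x, ‖g x‖ ≤ M)
    (hgce : (fun ω => ∑ j, (if Z ω = z j then (1 : ℝ) else 0) * g (X ω) j) =ᵐ[μ]
      μ[C | MeasurableSpace.comap (fun ω => (X ω, Z ω)) inferInstance])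
    (pol : (Fin p → ℝ) → Fin m → ℝ) (hpol : Measurable pol)
    (hpol01 : ∀ x j, pol x j = 0 ∨ pol x j = 1)
    (hpolOH : ∀ x, ∃! j, pol x j = 1) :
    ∫ ω, ∑ j, (if Z ω = z j then (1 : ℝ) else 0) / e (X ω) j * C ω * pol (X ω) j ∂μ =
      ∫ ω, ∑ j, pol (X ω) j * g (X ω) j ∂μ := by
  obtain ⟨MC, hMC⟩ := hCb
  obtain ⟨Mg, hMg⟩ := hgb
  have key := fun j => key_term μ X hX z hz Z hZ C hC MC hMC e he g hg Mg hMg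
    pol hpol hpol01 j (hece j) (hepos j) hgce
  have hrint : ∀ j : Fin m, Integrable (fun ω => pol (X ω) j * g (X ω) j) μ := by
    intro j
    have hmeas : Measurable (fun ω => pol (X ω) j * g (X ω) j) :=
      ((measurable_pi_apply j).comp (hpol.comp hX)).mul ((measurable_pi_apply j).comp (hg.comp hX))
    have hbd : Integrable (fun _ : Ω => Mg) μ := integrable_const _
    refine hbd.mono' (hmeas.aestronglyMeasurable (μ := μ)) (ae_of_all _ fun ω => ?_)
    rw [Real.norm_eq_abs, abs_mul]
    have h1 : |pol (X ω) j| ≤ 1 := by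
      rcases hpol01 (X ω) j with h | h <;> rw [h] <;> norm_num
    have h2 : |g (X ω) j| ≤ Mg :=
      le_trans (by simpa using norm_le_pi_norm (g (X ω)) j) (hMg (X ω))
    calc |pol (X ω) j| * |g (X ω) j| ≤ 1 * Mg :=
          mul_le_mul h1 h2 (abs_nonneg _) zero_le_one
      _ = Mg := one_mul Mg
  rw [integral_finset_sum _ (fun j _ => (key j).1), integral_finset_sum _ (fun j _ => hrint j)]
  exact Finset.sum_congr rfl fun j _ => (key j).2
end
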